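/- Let $(w,v)$ be a pair of weights on $\mathbb{R}^n$ in $A_1^+(\mathcal{R})$ with constant $C$, i.e. for every cube $Q$ and every measurable $E\subset Q^+$ with $|E|>0$, $|E|/|Q| \le C\, v(E)/w(Q)$. Then $M^- w(x) \le C\, v(x)$ for almost every $x \in \mathbb{R}^n$, so $(w,v)\in A_1^+$. -/

import Mathlib

open MeasureTheory Set ENNReal

noncomputable section

/-- The half-open cube `∏ᵢ [aᵢ, aᵢ + h)` in `ℝⁿ`. -/
def cube {n : ℕ} (a : Fin n → ℝ) (h : ℝ) : Set (Fin n → ℝ) :=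
  Set.univ.pi fun i => Set.Ico (a i) (a i + h)

/-- The forward adjacent cube `Q⁺ = ∏ᵢ [aᵢ + h, aᵢ + 2h)`. -/
def cubePlus {n : ℕ} (a : Fin n → ℝ) (h : ℝ) : Set (Fin n → ℝ) :=
  Set.univ.pi fun i => Set.Ico (a i + h) (a i + 2 * h)

/-- The backward cube `Q_{x,h⁻} = ∏ᵢ [xᵢ - h, xᵢ)`. -/
def backCube {n : ℕ} (x : Fin n → ℝ) (h : ℝ) : Set (Fin n → ℝ) :=
  Set.univ.pi fun i => Set.Ico (x i - h) (x i)

/-- The one-sided (backward) Hardy–Littlewood maximal operator. -/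
def Mminus {n : ℕ} (w : (Fin n → ℝ) → ℝ≥0∞) (x : Fin n → ℝ) : ℝ≥0∞ :=
  ⨆ (h : ℝ) (_ : 0 < h), (∫⁻ y in backCube x h, w y) / volume (backCube x h)

namespace RA1Aux

variable {n : ℕ}

lemma measurableSet_cube (a : Fin n → ℝ) (h : ℝ) : MeasurableSet (cube a h) :=
  MeasurableSet.univ_pi fun _ => measurableSet_Ico

lemma measurableSet_cubePlus (a : Fin n → ℝ) (h : ℝ) : MeasurableSet (cubePlus a h) :=
  MeasurableSet.univ_pi fun _ => measurableSet_Ico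

lemma measurableSet_backCube (x : Fin n → ℝ) (h : ℝ) : MeasurableSet (backCube x h) :=
  MeasurableSet.univ_pi fun _ => measurableSet_Ico

lemma vol_cube (a : Fin n → ℝ) (h : ℝ) :
    volume (cube a h) = ENNReal.ofReal h ^ n := by
  rw [cube, volume_pi_pi]
  have : ∀ i : Fin n, volume (Ico (a i) (a i + h)) = ENNReal.ofReal h := fun i => by
    rw [Real.volume_Ico]; congr 1; ring
  simp [this]

lemma vol_cubePlus (a : Fin n → ℝ) (h : ℝ) :
    volume (cubePlus a h) = ENNReal.ofReal h ^ n := by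
  rw [cubePlus, volume_pi_pi]
  have : ∀ i : Fin n, volume (Ico (a i + h) (a i + 2 * h)) = ENNReal.ofReal h := fun i => by
    rw [Real.volume_Ico]; congr 1; ring
  simp [this]

lemma vol_backCube (x : Fin n → ℝ) (h : ℝ) :
    volume (backCube x h) = ENNReal.ofReal h ^ n := by
  rw [backCube, volume_pi_pi]
  have : ∀ i : Fin n, volume (Ico (x i - h) (x i)) = ENNReal.ofReal h := fun i => by
    rw [Real.volume_Ico]; congr 1; ring
  simp [this]

lemma lemA (C : ℝ) (w v : (Fin n → ℝ) → ℝ≥0∞) (hv : Measurable v)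
    (hA1R : ∀ (a : Fin n → ℝ) (h : ℝ), 0 < h → ∀ E ⊆ cubePlus a h,
      MeasurableSet E → 0 < volume E →
      volume E / volume (cube a h)
        ≤ ENNReal.ofReal C * ((∫⁻ x in E, v x) / ∫⁻ x in cube a h, w x))
    (a : Fin n → ℝ) (h : ℝ) (hh : 0 < h) :
    ∀ᵐ x : Fin n → ℝ, x ∈ cubePlus a h →
      (∫⁻ y in cube a h, w y) / volume (cube a h) ≤ ENNReal.ofReal C * v x := by
  set W := ∫⁻ y in cube a h, w y with hWdef
  have hμ0 : (ENNReal.ofReal h) ^ n ≠ 0 := pow_ne_zero _ (ENNReal.ofReal_pos.2 hh).ne'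
  have hμtop : (ENNReal.ofReal h) ^ n ≠ ⊤ := ENNReal.pow_ne_top ENNReal.ofReal_ne_top
  have hplus_pos : 0 < volume (cubePlus a h) := by
    rw [vol_cubePlus]; exact pos_iff_ne_zero.2 hμ0
  have hone := hA1R a h hh (cubePlus a h) subset_rfl (measurableSet_cubePlus a h) hplus_pos
  rw [vol_cubePlus, vol_cube, ENNReal.div_self hμ0 hμtop] at hone
  have hC0 : ENNReal.ofReal C ≠ 0 := by
    intro h0; rw [h0, zero_mul] at hone; exact zero_lt_one.not_ge hone
  have hWtop : W ≠ ⊤ := by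
    intro ht; rw [← hWdef, ht, ENNReal.div_top, mul_zero] at hone
    exact zero_lt_one.not_ge hone
  by_cases hW0 : W = 0
  · refine ae_of_all _ fun x _ => ?_
    rw [hW0, ENNReal.zero_div]; exact zero_le
  set lam := W / volume (cube a h) with hlam
  have hlam_top : lam ≠ ⊤ := by
    rw [hlam, vol_cube]; exact (ENNReal.div_lt_top hWtop hμ0).ne
  have key : ∀ q : ℚ, (Real.toNNReal (q : ℝ) : ℝ≥0∞) < lam →
      volume (cubePlus a h ∩
        {x | ENNReal.ofReal C * v x ≤ (Real.toNNReal (q : ℝ) : ℝ≥0∞)}) = 0 := by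
    intro q hq
    by_contra hne
    set q' : ℝ≥0∞ := (Real.toNNReal (q : ℝ) : ℝ≥0∞) with hq'def
    set B := cubePlus a h ∩ {x | ENNReal.ofReal C * v x ≤ q'} with hBdef
    have hpos : 0 < volume B := pos_iff_ne_zero.2 hne
    have hBmeas : MeasurableSet B :=
      (measurableSet_cubePlus a h).inter
        (measurableSet_le (hv.const_mul _) measurable_const)
    have hsub : B ⊆ cubePlus a h := inter_subset_left
    have hkey := hA1R a h hh B hsub hBmeas hpos
    have hBtop : volume B ≠ ⊤ := by
      refine (lt_of_le_of_lt (measure_mono hsub) ?_).ne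
      rw [vol_cubePlus]; exact lt_top_iff_ne_top.2 hμtop
    have hvB : ENNReal.ofReal C * ∫⁻ x in B, v x ≤ q' * volume B := by
      rw [← lintegral_const_mul _ hv]
      calc ∫⁻ x in B, ENNReal.ofReal C * v x
          ≤ ∫⁻ _ in B, q' := setLIntegral_mono measurable_const fun x hx => hx.2
        _ = q' * volume B := by rw [setLIntegral_const]
    have h2 : ENNReal.ofReal C * ((∫⁻ x in B, v x) / W)
        = (ENNReal.ofReal C * ∫⁻ x in B, v x) / W := (mul_div_assoc _ _ _).symm
    have h3 : (ENNReal.ofReal C * ∫⁻ x in B, v x) / W ≤ q' * volume B / W :=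
      ENNReal.div_le_div_right hvB W
    have h4 : q' * volume B / W < lam * volume B / W := by
      rw [div_eq_mul_inv, div_eq_mul_inv, mul_assoc, mul_assoc]
      refine ENNReal.mul_lt_mul_left ?_ ?_ hq
      · exact mul_ne_zero hpos.ne' (ENNReal.inv_ne_zero.2 hWtop)
      · exact ENNReal.mul_ne_top hBtop (ENNReal.inv_ne_top.2 hW0)
    have h5 : lam * volume B / W = volume B / volume (cube a h) := by
      rw [hlam, div_eq_mul_inv, div_eq_mul_inv, div_eq_mul_inv,
        show W * (volume (cube a h))⁻¹ * volume B * W⁻¹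
          = W * W⁻¹ * (volume B * (volume (cube a h))⁻¹) by ring,
        ENNReal.mul_inv_cancel hW0 hWtop, one_mul]
    exact lt_irrefl _ ((((hkey.trans_eq h2).trans h3).trans_lt h4).trans_eq h5)
  rw [ae_iff]
  have hsub : {x | ¬(x ∈ cubePlus a h → lam ≤ ENNReal.ofReal C * v x)}
      ⊆ ⋃ (q : ℚ), ⋃ (_ : (Real.toNNReal (q : ℝ) : ℝ≥0∞) < lam),
        (cubePlus a h ∩ {x | ENNReal.ofReal C * v x ≤ (Real.toNNReal (q : ℝ) : ℝ≥0∞)}) := by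
    intro x hx
    simp only [mem_setOf_eq, Classical.not_imp, not_le] at hx
    obtain ⟨q, _, h1, h2⟩ := ENNReal.lt_iff_exists_rat_btwn.1 hx.2
    exact mem_iUnion.2 ⟨q, mem_iUnion.2 ⟨h2, ⟨hx.1, h1.le⟩⟩⟩
  exact measure_mono_null hsub
    (measure_iUnion_null fun q => measure_iUnion_null fun hq => key q hq)

end RA1Aux

open RA1Aux

theorem restricted_A1_subset_A1_plus {n : ℕ} (C : ℝ) (hC : 0 ≤ C)
    (w v : (Fin n → ℝ) → ℝ≥0∞) (hw : Measurable w) (hv : Measurable v)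
    (hA1R : ∀ (a : Fin n → ℝ) (h : ℝ), 0 < h → ∀ E ⊆ cubePlus a h,
      MeasurableSet E → 0 < volume E →
      volume E / volume (cube a h)
        ≤ ENNReal.ofReal C * ((∫⁻ x in E, v x) / ∫⁻ x in cube a h, w x)) :
    ∀ᵐ x : Fin n → ℝ, Mminus w x ≤ ENNReal.ofReal C * v x := by
  classical
  have hae : ∀ᵐ x : Fin n → ℝ, ∀ (a : Fin n → ℚ) (r : ℚ), 0 < (r : ℝ) →
      x ∈ cubePlus (fun i => (a i : ℝ)) r →
      (∫⁻ y in cube (fun i => (a i : ℝ)) r, w y)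
        / volume (cube (fun i => (a i : ℝ)) r) ≤ ENNReal.ofReal C * v x := by
    rw [ae_all_iff]
    intro a
    rw [ae_all_iff]
    intro r
    by_cases hr : 0 < (r : ℝ)
    · filter_upwards [lemA C w v hv hA1R (fun i => (a i : ℝ)) r hr] with x hx _ hxmem
      exact hx hxmem
    · exact ae_of_all _ fun x h' => absurd h' hr
  filter_upwards [hae] with x hx
  refine iSup_le fun h => iSup_le fun hh => ?_
  rw [vol_backCube,
    ENNReal.div_le_iff_le_mul
      (Or.inl (pow_ne_zero _ (ENNReal.ofReal_pos.2 hh).ne'))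
      (Or.inl (ENNReal.pow_ne_top ENNReal.ofReal_ne_top))]
  set ν := volume.withDensity w with hν
  have hνa : ∀ s : Set (Fin n → ℝ), MeasurableSet s → ν s = ∫⁻ y in s, w y :=
    fun s hs => withDensity_apply w hs
  rw [← hνa _ (measurableSet_backCube x h)]
  set S : ℝ → Set (Fin n → ℝ) :=
    fun δ => Set.univ.pi fun i => Set.Ico (x i - h) (x i - δ) with hSdef
  have hSmeas : ∀ δ, MeasurableSet (S δ) :=
    fun δ => MeasurableSet.univ_pi fun _ => measurableSet_Ico
  -- Step 1: for every δ > 0 and rational r > h, ν (S δ) ≤ C v x * (ofReal r)^n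
  have key1 : ∀ δ : ℝ, 0 < δ → ∀ r : ℚ, h < (r : ℝ) →
      ν (S δ) ≤ ENNReal.ofReal C * v x * ENNReal.ofReal (r : ℝ) ^ n := by
    intro δ hδ r hr
    set ε := min δ (r : ℝ) with hε
    have hε0 : 0 < ε := lt_min hδ (hh.trans hr)
    have : ∀ i, ∃ q : ℚ, x i - r - ε < (q : ℝ) ∧ (q : ℝ) < x i - r :=
      fun i => exists_rat_btwn (by linarith)
    choose aq ha1 ha2 using this
    have hmem : x ∈ cubePlus (fun i => (aq i : ℝ)) r := by
      rw [cubePlus, mem_univ_pi]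
      intro i
      constructor
      · have := ha2 i; linarith
      · have h1 := ha1 i
        have h2 : ε ≤ (r : ℝ) := min_le_right _ _
        show x i < (aq i : ℝ) + 2 * (r : ℝ)
        linarith
    have hx' := hx aq r (hh.trans hr) hmem
    rw [vol_cube] at hx'
    have hr0 : (0:ℝ) < (r:ℝ) := hh.trans hr
    have hrn0 : ENNReal.ofReal (r : ℝ) ^ n ≠ 0 := pow_ne_zero _ (ENNReal.ofReal_pos.2 hr0).ne'
    have hrntop : ENNReal.ofReal (r : ℝ) ^ n ≠ ⊤ := ENNReal.pow_ne_top ENNReal.ofReal_ne_top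
    have hx'' : (∫⁻ y in cube (fun i => (aq i : ℝ)) r, w y)
        ≤ ENNReal.ofReal C * v x * ENNReal.ofReal (r : ℝ) ^ n :=
      (ENNReal.div_le_iff_le_mul (Or.inl hrn0) (Or.inl hrntop)).1 hx'
    have hsub : S δ ⊆ cube (fun i => (aq i : ℝ)) r := by
      intro y hy
      rw [hSdef, mem_univ_pi] at hy
      rw [cube, mem_univ_pi]
      intro i
      obtain ⟨hy1, hy2⟩ := hy i
      have h1 := ha1 i
      have h2 := ha2 i
      have h3 : ε ≤ δ := min_le_left _ _
      constructor
      · show (aq i : ℝ) ≤ y i; linarith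
      · show y i < (aq i : ℝ) + (r : ℝ); linarith
    calc ν (S δ) ≤ ν (cube (fun i => (aq i : ℝ)) r) := measure_mono hsub
      _ = ∫⁻ y in cube (fun i => (aq i : ℝ)) r, w y := hνa _ (measurableSet_cube _ _)
      _ ≤ ENNReal.ofReal C * v x * ENNReal.ofReal (r : ℝ) ^ n := hx''
  -- Step 2: limit r ↓ h
  have key2 : ∀ δ : ℝ, 0 < δ →
      ν (S δ) ≤ ENNReal.ofReal C * v x * ENNReal.ofReal h ^ n := by
    intro δ hδ
    by_cases hcv : ENNReal.ofReal C * v x = ⊤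
    · rw [hcv, ENNReal.top_mul (pow_ne_zero _ (ENNReal.ofReal_pos.2 hh).ne')]
      exact le_top
    · have hseq : ∀ j : ℕ, ∃ q : ℚ, h < (q : ℝ) ∧ (q : ℝ) < h + 1 / ((j : ℝ) + 1) := by
        intro j
        refine exists_rat_btwn ?_
        have : (0:ℝ) < 1 / ((j : ℝ) + 1) := by positivity
        linarith
      choose r hr1 hr2 using hseq
      have hrt : Filter.Tendsto (fun j : ℕ => ((r j : ℝ))) Filter.atTop (nhds h) := by
        refine tendsto_of_tendsto_of_tendsto_of_le_of_le (f := fun j : ℕ => ((r j : ℝ)))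
          (g := fun _ : ℕ => h) (h := fun j : ℕ => h + 1 / ((j : ℝ) + 1))
          tendsto_const_nhds ?_ (fun j => (hr1 j).le) (fun j => (hr2 j).le)
        have := tendsto_one_div_add_atTop_nhds_zero_nat (𝕜 := ℝ)
        have h2 := Filter.Tendsto.const_add h this
        simpa using h2
      have htend : Filter.Tendsto
          (fun j : ℕ => ENNReal.ofReal C * v x * ENNReal.ofReal ((r j : ℝ)) ^ n)
          Filter.atTop (nhds (ENNReal.ofReal C * v x * ENNReal.ofReal h ^ n)) := by
        have h1 := (ENNReal.continuous_ofReal.tendsto h).comp hrt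
        have h2 := ((ENNReal.continuous_pow n).tendsto (ENNReal.ofReal h)).comp h1
        exact ENNReal.Tendsto.const_mul h2 (Or.inr hcv)
      exact ge_of_tendsto' htend fun j => key1 δ hδ (r j) (hr1 j)
  -- Step 3: exhaust backCube by the S (1/(k+1))
  have hUnion : backCube x h ⊆ ⋃ k : ℕ, S (1 / ((k : ℝ) + 1)) := by
    intro y hy
    rw [backCube, mem_univ_pi] at hy
    have : ∀ i, ∃ k : ℕ, 1 / ((k : ℝ) + 1) < x i - y i := by
      intro i
      exact exists_nat_one_div_lt (by have := (hy i).2; linarith)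
    choose k hk using this
    refine mem_iUnion.2 ⟨Finset.univ.sup k, ?_⟩
    set K : ℕ := Finset.univ.sup k with hK
    rw [hSdef, mem_univ_pi]
    intro i
    refine ⟨(hy i).1, ?_⟩
    have hki : k i ≤ K := Finset.le_sup (Finset.mem_univ i)
    have hle : 1 / ((K : ℝ) + 1) ≤ 1 / ((k i : ℝ) + 1) := by
      apply one_div_le_one_div_of_le
      · positivity
      · have : (k i : ℝ) ≤ (K : ℝ) := Nat.cast_le.2 hki
        linarith
    have := hk i
    show y i < x i - 1 / ((K : ℝ) + 1)
    linarith
  have hdir : Directed (· ⊆ ·) (fun k : ℕ => S (1 / ((k : ℝ) + 1))) := by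
    have hmono : Monotone (fun k : ℕ => S (1 / ((k : ℝ) + 1))) := by
      intro k k' hkk y hy
      rw [hSdef, mem_univ_pi] at hy ⊢
      intro i
      obtain ⟨hy1, hy2⟩ := hy i
      refine ⟨hy1, lt_of_lt_of_le hy2 ?_⟩
      have hle : 1 / ((k' : ℝ) + 1) ≤ 1 / ((k : ℝ) + 1) := by
        apply one_div_le_one_div_of_le
        · positivity
        · have : (k : ℝ) ≤ (k' : ℝ) := Nat.cast_le.2 hkk
          linarith
      linarith
    exact hmono.directed_le
  calc ν (backCube x h) ≤ ν (⋃ k : ℕ, S (1 / ((k : ℝ) + 1))) := measure_mono hUnion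
    _ = ⨆ k : ℕ, ν (S (1 / ((k : ℝ) + 1))) := hdir.measure_iUnion
    _ ≤ ENNReal.ofReal C * v x * ENNReal.ofReal h ^ n :=
        iSup_le fun k => key2 _ (by positivity)
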